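/- Let g : ℝ → ℝ be a function in class 𝒢 such that g(x) > 0 for all x ≥ 0, g is twice differentiable on [0, ∞), the second derivative of log ∘ g is ≤ 0 at every x ≥ 0, and the second derivative of g is ≥ 0 at every x ≥ 0. Then g is in class 𝒢₂. -/

import Mathlib

/-- A function `g : ℝ → ℝ` is in class 𝒢 if it is either even or odd,
`g 0 ≥ 0`, and `g` is monotonically nondecreasing on `[0, ∞)`. -/
def ClassG (g : ℝ → ℝ) : Prop :=
  ((∀ x, g (-x) = g x) ∨ (∀ x, g (-x) = -g x)) ∧ 0 ≤ g 0 ∧ MonotoneOn g (Set.Ici 0)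

/-- A function `g : ℝ → ℝ` is in class 𝒢₂ if it is in class 𝒢 and for all
`x ≥ y ≥ 0` and `z ≥ 0`, `g x * g (y + z) ≥ g y * g (x + z)` and
`g x + g (y + z) ≤ g y + g (x + z)`. -/
def ClassG2 (g : ℝ → ℝ) : Prop :=
  ClassG g ∧ ∀ x y z : ℝ, y ≤ x → 0 ≤ y → 0 ≤ z →
    g y * g (x + z) ≤ g x * g (y + z) ∧ g x + g (y + z) ≤ g y + g (x + z)

/-- Two-point majorization inequality for convex functions. -/
lemma two_point_aux {f : ℝ → ℝ} {s : Set ℝ} (hf : ConvexOn ℝ s f) {a b x y : ℝ}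
    (ha : a ∈ s) (hb : b ∈ s) (hax : a ≤ x) (hxb : x ≤ b) (hxy : x + y = a + b) :
    f x + f y ≤ f a + f b := by
  rcases eq_or_lt_of_le (hax.trans hxb) with h | h
  · have hxa : x = a := le_antisymm (h ▸ hxb) hax
    have hyb : y = b := by linarith
    rw [hxa, hyb]
  · set t : ℝ := (x - a) / (b - a) with ht
    have hba : 0 < b - a := by linarith
    have ht0 : 0 ≤ t := div_nonneg (by linarith) hba.le
    have ht1 : t ≤ 1 := by
      rw [div_le_one hba]; linarith
    have hx' : x = (1 - t) * a + t * b := by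
      have h3 : t * (b - a) = x - a := div_mul_cancel₀ (x - a) hba.ne'
      linear_combination -h3
    have hy' : y = t * a + (1 - t) * b := by
      have : y = a + b - x := by linarith
      rw [this, hx']; ring
    have h1 := hf.2 ha hb (by linarith : (0:ℝ) ≤ 1 - t) ht0 (by ring)
    have h2 := hf.2 ha hb ht0 (by linarith : (0:ℝ) ≤ 1 - t) (by ring)
    simp only [smul_eq_mul] at h1 h2
    rw [← hx'] at h1
    rw [← hy'] at h2
    linarith

theorem stmt_4 (g : ℝ → ℝ) (hG : ClassG g)
    (hpos : ∀ x : ℝ, 0 ≤ x → 0 < g x)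
    (hdiff : DifferentiableOn ℝ g (Set.Ici 0))
    (hdiff2 : DifferentiableOn ℝ (derivWithin g (Set.Ici 0)) (Set.Ici 0))
    (hlogconc : ∀ x : ℝ, 0 ≤ x →
      derivWithin (derivWithin (fun t => Real.log (g t)) (Set.Ici 0)) (Set.Ici 0) x ≤ 0)
    (hconv : ∀ x : ℝ, 0 ≤ x →
      0 ≤ derivWithin (derivWithin g (Set.Ici 0)) (Set.Ici 0) x) :
    ClassG2 g := by
  set D : Set ℝ := Set.Ici 0 with hD
  have hint : interior D = Set.Ioi (0:ℝ) := interior_Ici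
  have hconvD : Convex ℝ D := convex_Ici 0
  -- g is convex on D
  have hgconv : ConvexOn ℝ D g := by
    apply convexOn_of_hasDerivWithinAt2_nonneg hconvD hdiff.continuousOn
      (f' := derivWithin g D) (f'' := derivWithin (derivWithin g D) D)
    · intro x hx
      rw [hint] at hx
      exact ((hdiff x (Set.mem_Ici.mpr (le_of_lt hx))).hasDerivWithinAt).mono interior_subset
    · intro x hx
      rw [hint] at hx
      exact ((hdiff2 x (Set.mem_Ici.mpr (le_of_lt hx))).hasDerivWithinAt).mono interior_subset
    · intro x hx
      rw [hint] at hx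
      exact hconv x (le_of_lt hx)
  -- log ∘ g is concave on D
  set L : ℝ → ℝ := fun t => Real.log (g t) with hL
  have hgne : ∀ x ∈ D, g x ≠ 0 := fun x hx => (hpos x hx).ne'
  have hLdiff : DifferentiableOn ℝ L D := fun x hx =>
    ((hdiff x hx).hasDerivWithinAt.log (hgne x hx)).differentiableWithinAt
  have hLcont : ContinuousOn L D := hLdiff.continuousOn
  -- L' = g'/g on D
  have hLderiv : ∀ x ∈ D, derivWithin L D x = derivWithin g D x / g x := by
    intro x hx
    exact ((hdiff x hx).hasDerivWithinAt.log (hgne x hx)).derivWithin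
      (uniqueDiffOn_Ici 0 x hx)
  have hL'diff : DifferentiableOn ℝ (derivWithin L D) D := by
    apply DifferentiableOn.congr (f := fun x => derivWithin g D x / g x)
    · exact hdiff2.div hdiff hgne
    · exact hLderiv
  have hLconc : ConcaveOn ℝ D L := by
    apply concaveOn_of_hasDerivWithinAt2_nonpos hconvD hLcont
      (f' := derivWithin L D) (f'' := derivWithin (derivWithin L D) D)
    · intro x hx
      rw [hint] at hx
      exact ((hLdiff x (Set.mem_Ici.mpr (le_of_lt hx))).hasDerivWithinAt).mono interior_subset
    · intro x hx
      rw [hint] at hx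
      exact ((hL'diff x (Set.mem_Ici.mpr (le_of_lt hx))).hasDerivWithinAt).mono interior_subset
    · intro x hx
      rw [hint] at hx
      exact hlogconc x (le_of_lt hx)
  refine ⟨hG, fun x y z hyx hy hz => ?_⟩
  have hx : 0 ≤ x := hy.trans hyx
  have hyD : y ∈ D := hy
  have hxzD : x + z ∈ D := by simp only [hD, Set.mem_Ici]; linarith
  constructor
  · -- g y * g (x + z) ≤ g x * g (y + z)
    have hlog := two_point_aux hLconc.neg hyD hxzD hyx (by linarith : x ≤ x + z)
      (by ring : x + (y + z) = y + (x + z))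
    have hlog' : L y + L (x + z) ≤ L x + L (y + z) := by
      simp only [Pi.neg_apply] at hlog; linarith
    have h1 : Real.log (g y * g (x + z)) ≤ Real.log (g x * g (y + z)) := by
      rw [Real.log_mul (hgne y hyD) (hgne _ hxzD),
        Real.log_mul (hpos x hx).ne' (hpos (y + z) (by linarith)).ne']
      exact hlog'
    exact (Real.log_le_log_iff (mul_pos (hpos y hy) (hpos _ (by linarith))) (mul_pos (hpos x hx) (hpos _ (by linarith)))).mp h1
  · exact two_point_aux hgconv hyD hxzD hyx (by linarith : x ≤ x + z)
      (by ring : x + (y + z) = y + (x + z))
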